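/- arXiv:2004.06348 — 2 statements merged into one kernel-verified Lean document; each statement's English description precedes it below -/
import Mathlib

section
/- Along SI-PPSP with zero-mean independent noises β_i(k) of variance v_i(k)², the expected value of the estimator y_i(k) = ∑_{r=0}^{n−1} x_i(k+r) equals ∑_{j=1}^n s_j for all i and k, where x(k) = A^k s + ∑_{m=0}^{k−1} A^m(I − A)β(k−1−m) and A is the cyclic shift matrix. -/
open MeasureTheory ProbabilityTheory

theorem expectation_of_estimator {Ω : Type*} [MeasurableSpace Ω]
    (μ : Measure Ω) [IsProbabilityMeasure μ] (n : ℕ) (hn : 1 ≤ n)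
    (A : Matrix (Fin n) (Fin n) ℝ)
    (hA : ∀ i j, A i j = if (i : ℕ) = ((j : ℕ) + 1) % n then 1 else 0)
    (s : Fin n → ℝ) (β : ℕ → Ω → Fin n → ℝ)
    (hint : ∀ k i, Integrable (fun ω => β k ω i) μ)
    (hmean : ∀ k i, ∫ ω, β k ω i ∂μ = 0)
    (hindep : iIndepFun (fun (p : ℕ × Fin n) ω => β p.1 ω p.2) μ)
    (x : ℕ → Ω → Fin n → ℝ)
    (hx : ∀ k ω, x k ω = (A ^ k).mulVec s
      + ∑ m ∈ Finset.range k, ((A ^ m) * (1 - A)).mulVec (β (k - 1 - m) ω))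
    (y : ℕ → Ω → Fin n → ℝ)
    (hy : ∀ k ω i, y k ω i = ∑ r ∈ Finset.range n, x (k + r) ω i) :
    ∀ (i : Fin n) (k : ℕ), ∫ ω, y k ω i ∂μ = ∑ j, s j := by
  haveI : NeZero n := ⟨by omega⟩
  letI : CommRing (Fin n) := Fin.instCommRing n
  -- A acts as a shift
  have hA1 : ∀ (v : Fin n → ℝ) (i : Fin n), A.mulVec v i = v (i - 1) := by
    intro v i
    simp only [Matrix.mulVec, dotProduct, hA]
    rw [Finset.sum_eq_single (i - 1)]
    · have h : (i : ℕ) = (((i - 1 : Fin n) : ℕ) + 1) % n := by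
        have : i - 1 + 1 = i := by ring
        conv_lhs => rw [← this]
        rw [Fin.val_add, Fin.val_one']
        rw [Nat.add_mod, Nat.mod_mod, ← Nat.add_mod]
      simp [h]
    · intro j _ hj
      have h : ¬ ((i : ℕ) = ((j : ℕ) + 1) % n) := by
        intro hc
        apply hj
        have : i = j + 1 := by
          apply Fin.ext
          rw [Fin.val_add, Fin.val_one', Nat.add_mod, Nat.mod_mod, ← Nat.add_mod]
          exact hc
        rw [this]
        simp
      simp [h]
    · simp
  have hpow : ∀ (m : ℕ) (v : Fin n → ℝ) (i : Fin n),
      (A ^ m).mulVec v i = v (i - (m : Fin n)) := by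
    intro m
    induction m with
    | zero => intro v i; simp [Matrix.one_mulVec]
    | succ m ih =>
      intro v i
      rw [pow_succ, ← Matrix.mulVec_mulVec, ih, hA1]
      congr 1
      push_cast
      ring
  -- integrability of x
  have hxInt : ∀ k i, Integrable (fun ω => x k ω i) μ := by
    intro k i
    have : (fun ω => x k ω i)
        = fun ω => (A ^ k).mulVec s i
          + ∑ m ∈ Finset.range k, ∑ l, ((A ^ m) * (1 - A)) i l * β (k - 1 - m) ω l := by
      funext ω
      rw [hx]
      simp [Matrix.mulVec, dotProduct]
    rw [this]
    apply Integrable.add (integrable_const _)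
    apply integrable_finset_sum
    intro m _
    apply integrable_finset_sum
    intro l _
    exact (hint _ _).const_mul _
  have hxint : ∀ k i, ∫ ω, x k ω i ∂μ = (A ^ k).mulVec s i := by
    intro k i
    have heq : (fun ω => x k ω i)
        = fun ω => (A ^ k).mulVec s i
          + ∑ m ∈ Finset.range k, ∑ l, ((A ^ m) * (1 - A)) i l * β (k - 1 - m) ω l := by
      funext ω
      rw [hx]
      simp [Matrix.mulVec, dotProduct]
    rw [heq, integral_add (integrable_const _), integral_const]
    · rw [integral_finset_sum]
      · have : ∀ m ∈ Finset.range k,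
            ∫ ω, ∑ l, ((A ^ m) * (1 - A)) i l * β (k - 1 - m) ω l ∂μ = 0 := by
          intro m _
          rw [integral_finset_sum]
          · simp only [integral_const_mul, hmean, mul_zero, Finset.sum_const_zero]
          · intro l _
            exact (hint _ _).const_mul _
        rw [Finset.sum_congr rfl this]
        simp
      · intro m _
        apply integrable_finset_sum
        intro l _
        exact (hint _ _).const_mul _
    · apply integrable_finset_sum
      intro m _
      apply integrable_finset_sum
      intro l _
      exact (hint _ _).const_mul _
  intro i k
  have hyeq : (fun ω => y k ω i) = fun ω => ∑ r ∈ Finset.range n, x (k + r) ω i := by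
    funext ω; exact hy k ω i
  rw [hyeq, integral_finset_sum _ (fun r _ => hxInt (k + r) i)]
  simp only [hxint, hpow]
  rw [← Fin.sum_univ_eq_sum_range (fun r => s (i - ((k + r : ℕ) : Fin n)))]
  have : ∀ j : Fin n, s (i - ((k + (j : ℕ) : ℕ) : Fin n)) = s ((i - (k : Fin n)) - j) := by
    intro j
    congr 1
    push_cast
    ring
  rw [Finset.sum_congr rfl (fun j _ => this j)]
  exact Equiv.sum_comp (Equiv.subLeft (i - (k : Fin n))) s
end

section
/- Along the recursion x(k+1) = Ax(k) + (I−A)β(k) with A the n×n cyclic shift matrix and independent zero-mean noise vectors β(k) with independent components of variance at most σ_M(k)², the trace of the covariance of y(k) = ∑_{r=0}^{n−1} x(k+r) satisfies tr(cov(y(k))) ≤ 2n ∑_{l=k}^{k+n−1} ∑_{m=0}^{l−1} σ_M(l−1−m)². -/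
open MeasureTheory ProbabilityTheory
open scoped Fin.NatCast Fin.CommRing

private lemma variance_const_add'' {Ω : Type*} [MeasurableSpace Ω]
    (μ : Measure Ω) [IsProbabilityMeasure μ] (c : ℝ) (X : Ω → ℝ)
    (hX : Integrable X μ) :
    variance (fun ω => c + X ω) μ = variance X μ := by
  have h : (μ[fun ω => c + X ω] : ℝ) = c + μ[X] := by
    rw [integral_add (integrable_const c) hX, integral_const]
    simp
  unfold ProbabilityTheory.variance ProbabilityTheory.evariance
  congr 1
  refine lintegral_congr fun ω => ?_
  rw [h]
  have : c + X ω - (c + μ[X]) = X ω - μ[X] := by ring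
  rw [this]

private lemma double_sum_telescope (n k : ℕ) (hn : 2 ≤ n) (h : ℕ → ℕ → ℝ)
    (hper : ∀ t m, h t (m + n) = h t m) :
    ∑ r ∈ Finset.range n, ∑ m ∈ Finset.range (k + r),
        (h (k + r - 1 - m) m - h (k + r - 1 - m) (m + 1))
      = ∑ t ∈ Finset.Ico k (k + n - 1), (h t 0 - h t (k + n - 1 - t)) := by
  have step1 : ∀ r, ∑ m ∈ Finset.range (k + r),
      (h (k + r - 1 - m) m - h (k + r - 1 - m) (m + 1))
      = ∑ t ∈ Finset.range (k + r), (h t (k + r - 1 - t) - h t (k + r - t)) := by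
    intro r
    rw [← Finset.sum_range_reflect (fun t => h t (k + r - 1 - t) - h t (k + r - t)) (k + r)]
    refine Finset.sum_congr rfl fun m hm => ?_
    rw [Finset.mem_range] at hm
    have e1 : k + r - 1 - (k + r - 1 - m) = m := by omega
    have e2 : k + r - (k + r - 1 - m) = m + 1 := by omega
    rw [e1, e2]
  simp_rw [step1]
  have step2 : ∀ r ∈ Finset.range n, ∑ t ∈ Finset.range (k + r),
      (h t (k + r - 1 - t) - h t (k + r - t))
      = ∑ t ∈ Finset.range (k + n - 1),
          (if t < k + r then h t (k + r - 1 - t) - h t (k + r - t) else 0) := by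
    intro r hr
    rw [Finset.mem_range] at hr
    rw [Finset.range_eq_Ico, Finset.range_eq_Ico,
      ← Finset.sum_Ico_consecutive _ (Nat.zero_le (k + r)) (by omega : k + r ≤ k + n - 1)]
    have h2 : ∑ t ∈ Finset.Ico (k + r) (k + n - 1),
        (if t < k + r then h t (k + r - 1 - t) - h t (k + r - t) else 0) = 0 := by
      refine Finset.sum_eq_zero fun t ht => ?_
      rw [Finset.mem_Ico] at ht
      rw [if_neg (by omega)]
    rw [h2, add_zero]
    refine Finset.sum_congr rfl fun t ht => ?_
    rw [Finset.mem_Ico] at ht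
    rw [if_pos (by omega)]
  rw [Finset.sum_congr rfl step2, Finset.sum_comm]
  have step3 : ∀ t ∈ Finset.range (k + n - 1),
      ∑ r ∈ Finset.range n, (if t < k + r then h t (k + r - 1 - t) - h t (k + r - t) else 0)
      = if k ≤ t then h t 0 - h t (k + n - 1 - t) else 0 := by
    intro t ht
    rw [Finset.mem_range] at ht
    set r0 := t + 1 - k with hr0
    have hr0n : r0 ≤ n := by omega
    rw [Finset.range_eq_Ico, ← Finset.sum_Ico_consecutive _ (Nat.zero_le r0) hr0n]
    have hfirst : ∑ r ∈ Finset.Ico 0 r0,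
        (if t < k + r then h t (k + r - 1 - t) - h t (k + r - t) else 0) = 0 := by
      refine Finset.sum_eq_zero fun r hr => ?_
      rw [Finset.mem_Ico] at hr
      rw [if_neg (by omega)]
    rw [hfirst, zero_add]
    have hsecond : ∑ r ∈ Finset.Ico r0 n,
        (if t < k + r then h t (k + r - 1 - t) - h t (k + r - t) else 0)
        = ∑ u ∈ Finset.range (n - r0),
            (h t (k + r0 - 1 - t + u) - h t (k + r0 - 1 - t + (u + 1))) := by
      rw [Finset.sum_Ico_eq_sum_range]
      refine Finset.sum_congr rfl fun u hu => ?_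
      rw [Finset.mem_range] at hu
      rw [if_pos (by omega)]
      have e1 : k + (r0 + u) - 1 - t = k + r0 - 1 - t + u := by omega
      have e2 : k + (r0 + u) - t = k + r0 - 1 - t + (u + 1) := by omega
      rw [e1, e2]
    rw [hsecond, Finset.sum_range_sub' (fun u => h t (k + r0 - 1 - t + u)) (n - r0)]
    by_cases hk : k ≤ t
    · rw [if_pos hk]
      have e1 : k + r0 - 1 - t + 0 = 0 := by omega
      have e2 : k + r0 - 1 - t + (n - r0) = k + n - 1 - t := by omega
      rw [e1, e2]
    · rw [if_neg hk]
      have e1 : k + r0 - 1 - t + (n - r0) = (k + r0 - 1 - t + 0) + n := by omega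
      rw [e1, hper, sub_self]
  rw [Finset.sum_congr rfl step3]
  rw [Finset.range_eq_Ico,
    ← Finset.sum_Ico_consecutive _ (Nat.zero_le k) (by omega : k ≤ k + n - 1)]
  have hz : ∑ t ∈ Finset.Ico 0 k, (if k ≤ t then h t 0 - h t (k + n - 1 - t) else 0) = 0 := by
    refine Finset.sum_eq_zero fun t ht => ?_
    rw [Finset.mem_Ico] at ht
    rw [if_neg (by omega)]
  rw [hz, zero_add]
  refine Finset.sum_congr rfl fun t ht => ?_
  rw [Finset.mem_Ico] at ht
  rw [if_pos ht.1]

theorem trace_cov_of_estimator {Ω : Type*} [MeasurableSpace Ω]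
    (μ : Measure Ω) [IsProbabilityMeasure μ] (n : ℕ) (hn : 2 ≤ n)
    (A : Matrix (Fin n) (Fin n) ℝ)
    (hA : ∀ i j, A i j = if (i : ℕ) = ((j : ℕ) + 1) % n then 1 else 0)
    (s : Fin n → ℝ) (β : ℕ → Ω → Fin n → ℝ) (σM : ℕ → ℝ)
    (hL2 : ∀ k i, MemLp (fun ω => β k ω i) 2 μ)
    (hmean : ∀ k i, ∫ ω, β k ω i ∂μ = 0)
    (hvar : ∀ k i, variance (fun ω => β k ω i) μ ≤ (σM k) ^ 2)
    (hindep : iIndepFun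
      (fun (p : ℕ × Fin n) ω => β p.1 ω p.2) μ)
    (x : ℕ → Ω → Fin n → ℝ)
    (hx : ∀ k ω, x k ω = (A ^ k).mulVec s
      + ∑ m ∈ Finset.range k, ((A ^ m) * (1 - A)).mulVec (β (k - 1 - m) ω))
    (y : ℕ → Ω → Fin n → ℝ)
    (hy : ∀ k ω i, y k ω i = ∑ r ∈ Finset.range n, x (k + r) ω i) :
    ∀ k : ℕ, ∑ i, variance (fun ω => y k ω i) μ
      ≤ 2 * n * ∑ l ∈ Finset.Ico k (k + n),
          ∑ m ∈ Finset.range l, (σM (l - 1 - m)) ^ 2 := by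
  haveI : NeZero n := ⟨by omega⟩
  have h1 : 1 % n = 1 := Nat.mod_eq_of_lt (by omega)
  -- entries of A in Fin-subtraction form
  have hA' : ∀ i j, A i j = if j = i - 1 then 1 else 0 := by
    intro i j
    rw [hA]
    congr 1
    simp only [eq_iff_iff]
    constructor
    · intro h
      have : i = j + 1 := by
        rw [Fin.ext_iff, Fin.val_add, Fin.val_one', h1]
        omega
      rw [this]; ring
    · intro h
      have : i = j + 1 := by rw [h]; ring
      rw [this, Fin.val_add, Fin.val_one', h1]
  have hbase : ∀ (v : Fin n → ℝ) (i : Fin n), A.mulVec v i = v (i - 1) := by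
    intro v i
    simp only [Matrix.mulVec, dotProduct, hA', ite_mul, one_mul, zero_mul]
    rw [Finset.sum_ite_eq' Finset.univ (i - 1) v]
    simp
  have hApow : ∀ (m : ℕ) (v : Fin n → ℝ) (i : Fin n),
      (A ^ m).mulVec v i = v (i - (m : Fin n)) := by
    intro m
    induction m with
    | zero => intro v i; simp [Matrix.one_mulVec]
    | succ m ih =>
      intro v i
      rw [pow_succ, ← Matrix.mulVec_mulVec, ih, hbase]
      congr 1
      push_cast
      ring
  have hM : ∀ (m : ℕ) (v : Fin n → ℝ) (i : Fin n),
      ((A ^ m * (1 - A)).mulVec v) i = v (i - (m : Fin n)) - v (i - (m : Fin n) - 1) := by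
    intro m v i
    rw [← Matrix.mulVec_mulVec, hApow, Matrix.sub_mulVec, Matrix.one_mulVec,
      Pi.sub_apply, hbase]
  intro k
  -- closed form for y
  have hform : ∀ (i : Fin n) (ω : Ω), y k ω i
      = (∑ r ∈ Finset.range n, s (i - ((k + r : ℕ) : Fin n)))
        + ∑ t ∈ Finset.Ico k (k + n - 1),
            (β t ω i - β t ω (i - ((k + n - 1 - t : ℕ) : Fin n))) := by
    intro i ω
    have hx' : ∀ r, x (k + r) ω i = s (i - ((k + r : ℕ) : Fin n))
        + ∑ m ∈ Finset.range (k + r),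
            (β (k + r - 1 - m) ω (i - (m : Fin n))
              - β (k + r - 1 - m) ω (i - (m : Fin n) - 1)) := by
      intro r
      rw [congrFun (hx (k + r) ω) i]
      simp only [Pi.add_apply, Finset.sum_apply]
      rw [hApow]
      congr 1
      exact Finset.sum_congr rfl fun m _ => hM m _ i
    rw [hy]
    simp_rw [hx']
    rw [Finset.sum_add_distrib]
    congr 1
    have hcast : ∀ m : ℕ, ((m + 1 : ℕ) : Fin n) = (m : Fin n) + 1 := by
      intro m; push_cast; ring
    have hpern : ∀ m : ℕ, ((m + n : ℕ) : Fin n) = (m : Fin n) := by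
      intro m; push_cast [Fin.natCast_self]; ring
    have := double_sum_telescope n k hn (fun t m => β t ω (i - (m : Fin n)))
      (fun t m => by simp only [hpern])
    simp only [Nat.cast_zero, sub_zero] at this
    rw [← this]
    refine Finset.sum_congr rfl fun r _ => Finset.sum_congr rfl fun m _ => ?_
    rw [hcast m, sub_sub]
  -- variance bound for each coordinate
  have key : ∀ i : Fin n, variance (fun ω => y k ω i) μ
      ≤ 2 * ∑ t ∈ Finset.Ico k (k + n - 1), σM t ^ 2 := by
    intro i
    set C : ℝ := ∑ r ∈ Finset.range n, s (i - ((k + r : ℕ) : Fin n)) with hC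
    set c : ℕ × Fin n → ℝ := fun p =>
      (if p.2 = i then (1 : ℝ) else 0)
        - (if p.2 = i - ((k + n - 1 - p.1 : ℕ) : Fin n) then 1 else 0) with hc
    set P : Finset (ℕ × Fin n) := (Finset.Ico k (k + n - 1)) ×ˢ Finset.univ with hP
    set X : ℕ × Fin n → Ω → ℝ := fun p ω => c p * β p.1 ω p.2 with hX2
    have hXl2 : ∀ p : ℕ × Fin n, MemLp (X p) 2 μ := fun p => (hL2 p.1 p.2).const_mul (c p)
    have hsingle : ∀ (t : ℕ) (ω : Ω) (a : Fin n),
        (∑ j : Fin n, (if j = a then (1 : ℝ) else 0) * β t ω j) = β t ω a := by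
      intro t ω a
      simp only [ite_mul, one_mul, zero_mul]
      rw [Finset.sum_ite_eq' Finset.univ a (β t ω)]
      simp
    have hZ : ∀ ω, y k ω i = C + ∑ p ∈ P, X p ω := by
      intro ω
      rw [hform i ω]
      congr 1
      rw [Finset.sum_product]
      refine Finset.sum_congr rfl fun t ht => ?_
      simp only [hX2, hc, sub_mul, Finset.sum_sub_distrib]
      rw [hsingle, hsingle]
    have hvar_eq : variance (fun ω => y k ω i) μ = ∑ p ∈ P, variance (X p) μ := by
      have hfun : (fun ω => y k ω i) = fun ω => C + (∑ p ∈ P, X p) ω := by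
        funext ω
        rw [hZ ω]
        simp [Finset.sum_apply]
      rw [hfun, variance_const_add'' μ C _
        ((memLp_finset_sum' P fun p _ => hXl2 p).integrable one_le_two)]
      exact IndepFun.variance_sum (fun p _ => hXl2 p)
        (fun p _ q _ hpq => (hindep.indepFun hpq).comp
          (measurable_id.const_mul (c p)) (measurable_id.const_mul (c q)))
    rw [hvar_eq]
    have hb1 : ∑ p ∈ P, variance (X p) μ ≤ ∑ p ∈ P, (c p) ^ 2 * σM p.1 ^ 2 := by
      refine Finset.sum_le_sum fun p _ => ?_
      have : variance (X p) μ = (c p) ^ 2 * variance (fun ω => β p.1 ω p.2) μ :=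
        variance_const_mul (c p) _ μ
      rw [this]
      exact mul_le_mul_of_nonneg_left (hvar p.1 p.2) (sq_nonneg _)
    refine hb1.trans ?_
    rw [Finset.sum_product]
    have hb2 : ∀ t ∈ Finset.Ico k (k + n - 1),
        ∑ j : Fin n, (c (t, j)) ^ 2 * σM t ^ 2 ≤ 2 * σM t ^ 2 := by
      intro t _
      rw [← Finset.sum_mul]
      refine mul_le_mul_of_nonneg_right ?_ (sq_nonneg _)
      have hptw : ∀ j : Fin n, (c (t, j)) ^ 2
          ≤ (if j = i then (1 : ℝ) else 0)
            + (if j = i - ((k + n - 1 - t : ℕ) : Fin n) then 1 else 0) := by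
        intro j
        simp only [hc]
        split_ifs <;> norm_num
      refine (Finset.sum_le_sum fun j _ => hptw j).trans ?_
      rw [Finset.sum_add_distrib]
      have e1 : (∑ j : Fin n, if j = i then (1 : ℝ) else 0) = 1 := by
        rw [Finset.sum_ite_eq' Finset.univ i (fun _ => (1 : ℝ))]
        simp
      have e2 : (∑ j : Fin n, if j = i - ((k + n - 1 - t : ℕ) : Fin n)
          then (1 : ℝ) else 0) = 1 := by
        rw [Finset.sum_ite_eq' Finset.univ _ (fun _ => (1 : ℝ))]
        simp
      rw [e1, e2]
      norm_num
    calc ∑ t ∈ Finset.Ico k (k + n - 1), ∑ j : Fin n, (c (t, j)) ^ 2 * σM t ^ 2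
        ≤ ∑ t ∈ Finset.Ico k (k + n - 1), 2 * σM t ^ 2 := Finset.sum_le_sum hb2
      _ = 2 * ∑ t ∈ Finset.Ico k (k + n - 1), σM t ^ 2 := by
          rw [Finset.mul_sum]
  -- sum over coordinates and compare with the RHS
  have hsum : ∑ i : Fin n, variance (fun ω => y k ω i) μ
      ≤ (n : ℝ) * (2 * ∑ t ∈ Finset.Ico k (k + n - 1), σM t ^ 2) := by
    calc ∑ i : Fin n, variance (fun ω => y k ω i) μ
        ≤ ∑ _i : Fin n, (2 * ∑ t ∈ Finset.Ico k (k + n - 1), σM t ^ 2) :=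
          Finset.sum_le_sum fun i _ => key i
      _ = (n : ℝ) * (2 * ∑ t ∈ Finset.Ico k (k + n - 1), σM t ^ 2) := by
          rw [Finset.sum_const, Finset.card_univ, Fintype.card_fin, nsmul_eq_mul]
  refine hsum.trans ?_
  have hR : ∑ t ∈ Finset.Ico k (k + n - 1), σM t ^ 2
      ≤ ∑ l ∈ Finset.Ico k (k + n), ∑ m ∈ Finset.range l, σM (l - 1 - m) ^ 2 := by
    have hrefl : ∀ l : ℕ, ∑ m ∈ Finset.range l, σM (l - 1 - m) ^ 2
        = ∑ t ∈ Finset.range l, σM t ^ 2 :=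
      fun l => Finset.sum_range_reflect (fun t => σM t ^ 2) l
    calc ∑ t ∈ Finset.Ico k (k + n - 1), σM t ^ 2
        ≤ ∑ t ∈ Finset.range (k + n - 1), σM t ^ 2 := by
          refine Finset.sum_le_sum_of_subset_of_nonneg ?_ fun t _ _ => sq_nonneg _
          intro t ht
          rw [Finset.mem_Ico] at ht
          rw [Finset.mem_range]
          omega
      _ ≤ ∑ l ∈ Finset.Ico k (k + n), ∑ t ∈ Finset.range l, σM t ^ 2 := by
          refine Finset.single_le_sum (f := fun l => ∑ t ∈ Finset.range l, σM t ^ 2)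
            (fun l _ => Finset.sum_nonneg fun t _ => sq_nonneg _) ?_
          rw [Finset.mem_Ico]
          omega
      _ = ∑ l ∈ Finset.Ico k (k + n), ∑ m ∈ Finset.range l, σM (l - 1 - m) ^ 2 :=
          Finset.sum_congr rfl fun l _ => (hrefl l).symm
  calc (n : ℝ) * (2 * ∑ t ∈ Finset.Ico k (k + n - 1), σM t ^ 2)
      = 2 * (n : ℝ) * ∑ t ∈ Finset.Ico k (k + n - 1), σM t ^ 2 := by ring
    _ ≤ 2 * (n : ℝ) * ∑ l ∈ Finset.Ico k (k + n),
          ∑ m ∈ Finset.range l, σM (l - 1 - m) ^ 2 :=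
        mul_le_mul_of_nonneg_left hR (by positivity)
end
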